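/- Let V be a real vector space of dimension 2n with a scalar product ⟨·,·⟩, J : V → V a skew-symmetric isomorphism with J² = -Id, and D : V → V an endomorphism with [J,D] = 0 and D + Dᵗ = -2·Id (Dᵗ the adjoint with respect to ⟨·,·⟩). Then there exist λ₁,…,λₙ ∈ ℝ and an orthonormal basis (e₁, Je₁, …, eₙ, Jeₙ) of V such that for each j, D eⱼ = -eⱼ - λⱼ J eⱼ and D(Jeⱼ) = -Jeⱼ + λⱼ eⱼ. -/

import Mathlib

open scoped RealInnerProductSpace

universe u

set_option maxHeartbeats 1600000 in
theorem aux_stmt0 : ∀ (n : ℕ) (V : Type u) [NormedAddCommGroup V] [InnerProductSpace ℝ V]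
    [FiniteDimensional ℝ V], Module.finrank ℝ V = 2 * n →
    ∀ (J D : V →ₗ[ℝ] V),
    LinearMap.adjoint J = -J →
    J ∘ₗ J = -LinearMap.id →
    Function.Bijective J →
    J ∘ₗ D = D ∘ₗ J →
    D + LinearMap.adjoint D = -(2 : ℝ) • LinearMap.id →
    ∃ (lam : Fin n → ℝ) (b : Module.Basis (Fin n ⊕ Fin n) ℝ V),
      Orthonormal ℝ b ∧
      (∀ j : Fin n, b (Sum.inr j) = J (b (Sum.inl j))) ∧
      (∀ j : Fin n, D (b (Sum.inl j)) = -b (Sum.inl j) - lam j • J (b (Sum.inl j))) ∧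
      (∀ j : Fin n, D (J (b (Sum.inl j))) = -J (b (Sum.inl j)) + lam j • b (Sum.inl j)) := by
  intro n
  induction n with
  | zero =>
    intro V _ _ _ hdim J D _ _ _ _ _
    have : Subsingleton V := Module.finrank_zero_iff.mp (by simpa using hdim)
    refine ⟨Fin.elim0, Module.Basis.empty V, ?_, fun j => j.elim0, fun j => j.elim0, fun j => j.elim0⟩
    rw [orthonormal_iff_ite]
    exact fun i => isEmptyElim i
  | succ n ih =>
    intro V _ _ _ hdim J D hJskew hJ2 hJbij hJD hD
    have hJJ : ∀ x : V, J (J x) = -x := fun x => by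
      have := LinearMap.ext_iff.mp hJ2 x; simpa using this
    have hDadj : LinearMap.adjoint D = -(2 : ℝ) • LinearMap.id - D := by
      rw [← hD]; abel
    have hadj_id : LinearMap.adjoint (LinearMap.id : V →ₗ[ℝ] V) = LinearMap.id :=
      ((LinearMap.eq_adjoint_iff _ _).mpr (fun _ _ => rfl)).symm
    -- the symmetric operator B = J ∘ (D + id)
    set A : V →ₗ[ℝ] V := D + LinearMap.id with hA
    have hAJ : J ∘ₗ A = A ∘ₗ J := by
      simp only [hA, LinearMap.comp_add, LinearMap.add_comp, hJD,
        LinearMap.comp_id, LinearMap.id_comp]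
    have hAadj : LinearMap.adjoint A = -A := by
      rw [hA, map_add, hDadj, hadj_id]
      ext x
      simp only [LinearMap.add_apply, LinearMap.sub_apply, LinearMap.smul_apply,
        LinearMap.id_apply, LinearMap.neg_apply]
      module
    set B : V →ₗ[ℝ] V := J ∘ₗ A with hB
    have hBadj : LinearMap.adjoint B = B := by
      rw [hB, LinearMap.adjoint_comp, hAadj, hJskew]
      ext x
      simp only [LinearMap.comp_apply, LinearMap.neg_apply, map_neg, neg_neg]
      exact (LinearMap.ext_iff.mp hAJ x).symm
    have hBsym : B.IsSymmetric := fun x y => by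
      nth_rewrite 1 [← hBadj]
      exact LinearMap.adjoint_inner_left B y x
    have : Nontrivial V := by
      have h0 : 0 < Module.finrank ℝ V := by omega
      exact Module.finrank_pos_iff.mp h0
    -- eigenvector of B
    obtain ⟨μ, hμ⟩ : ∃ μ : ℝ, Module.End.HasEigenvalue B μ :=
      ⟨_, hBsym.hasEigenvalue_iSup_of_finiteDimensional⟩
    obtain ⟨v, hv⟩ := hμ.exists_hasEigenvector
    have hv_ne : v ≠ 0 := hv.2
    have hvB : B v = μ • v := hv.apply_eq_smul
    obtain ⟨e, he_def⟩ : ∃ e : V, e = ‖v‖⁻¹ • v := ⟨_, rfl⟩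
    have he_norm : ‖e‖ = 1 := by rw [he_def]; exact norm_smul_inv_norm hv_ne
    have hBe : B e = μ • e := by
      rw [he_def, map_smul, hvB, smul_comm]
    have hJAe : J (A e) = μ • e := by
      rw [← LinearMap.comp_apply, ← hB]; exact hBe
    have hAe : A e = -(μ • J e) := by
      have h1 : J (J (A e)) = μ • J e := by rw [hJAe, map_smul]
      rw [hJJ (A e)] at h1
      rw [← h1, neg_neg]
    have hDe : D e = -e - μ • J e := by
      have h2 : D e = A e - e := by simp [hA]
      rw [h2, hAe]; module
    have hDJe : D (J e) = -J e + μ • e := by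
      have h1 : D (J e) = J (D e) := (LinearMap.ext_iff.mp hJD e).symm
      rw [h1, hDe, map_sub, map_neg, map_smul, hJJ e]
      module
    -- orthonormality of (e, J e)
    have hip_ee : ⟪e, e⟫ = 1 := by
      rw [real_inner_self_eq_norm_sq, he_norm]; norm_num
    have hip_eJe : ⟪e, J e⟫ = 0 := by
      have h1 := LinearMap.adjoint_inner_left J e e
      rw [hJskew] at h1
      simp only [LinearMap.neg_apply, inner_neg_left] at h1
      have hc : ⟪e, J e⟫ = ⟪J e, e⟫ := real_inner_comm _ _
      linarith
    have hip_Jee : ⟪J e, e⟫ = 0 := by rw [real_inner_comm]; exact hip_eJe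
    have hip_JeJe : ⟪J e, J e⟫ = 1 := by
      have h1 := LinearMap.adjoint_inner_left J (J e) e
      rw [hJskew] at h1
      simp only [LinearMap.neg_apply, hJJ e, inner_neg_left, inner_neg_right] at h1
      have h2 : ⟪J e, J e⟫ = ⟪e, e⟫ := by linarith
      rw [h2, hip_ee]
    have hJe_norm : ‖J e‖ = 1 := by
      have h2 : ‖J e‖ ^ 2 = 1 := by rw [← real_inner_self_eq_norm_sq, hip_JeJe]
      nlinarith [norm_nonneg (J e)]
    -- the span S of {e, J e} and its orthogonal complement W
    set g : Fin 2 → V := ![e, J e] with hg_def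
    have hg0 : g 0 = e := rfl
    have hg1 : g 1 = J e := rfl
    have hg_on : Orthonormal ℝ g := by
      rw [orthonormal_iff_ite]
      intro i j
      fin_cases i <;> fin_cases j <;>
        simp [hg0, hg1, hip_ee, hip_eJe, hip_Jee, hip_JeJe, he_norm, hJe_norm]
    set S : Submodule ℝ V := Submodule.span ℝ (Set.range g) with hS_def
    have he_mem : e ∈ S := Submodule.subset_span ⟨0, rfl⟩
    have hJe_mem : J e ∈ S := Submodule.subset_span ⟨1, rfl⟩
    set W : Submodule ℝ V := Sᗮ with hW_def
    have hSW : ∀ u ∈ S, ∀ w ∈ W, ⟪u, w⟫ = 0 := fun u hu w hw =>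
      (Submodule.mem_orthogonal S w).mp hw u hu
    -- invariance of W under maps whose adjoint preserves S
    have hinv : ∀ T : V →ₗ[ℝ] V, (LinearMap.adjoint T e ∈ S) → (LinearMap.adjoint T (J e) ∈ S) →
        ∀ x ∈ W, T x ∈ W := by
      intro T hTe hTJe x hx
      rw [hW_def, Submodule.mem_orthogonal]
      intro u hu
      rw [← LinearMap.adjoint_inner_left]
      have hu' : LinearMap.adjoint T u ∈ S := by
        have hle : S ≤ Submodule.comap (LinearMap.adjoint T) S := by
          rw [hS_def, Submodule.span_le]
          rintro _ ⟨i, rfl⟩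
          fin_cases i
          · exact hTe
          · exact hTJe
        exact hle hu
      exact hSW _ hu' x hx
    have hJW : ∀ x ∈ W, J x ∈ W := by
      refine hinv J ?_ ?_
      · rw [hJskew, LinearMap.neg_apply]
        exact S.neg_mem hJe_mem
      · rw [hJskew, LinearMap.neg_apply, hJJ e, neg_neg]
        exact he_mem
    have hDW : ∀ x ∈ W, D x ∈ W := by
      refine hinv D ?_ ?_
      · have h1 : LinearMap.adjoint D e = -e + μ • J e := by
          rw [hDadj]
          simp only [LinearMap.sub_apply, LinearMap.smul_apply, LinearMap.id_apply]
          rw [hDe]; module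
        rw [h1]
        exact S.add_mem (S.neg_mem he_mem) (S.smul_mem μ hJe_mem)
      · have h1 : LinearMap.adjoint D (J e) = -J e - μ • e := by
          rw [hDadj]
          simp only [LinearMap.sub_apply, LinearMap.smul_apply, LinearMap.id_apply]
          rw [hDJe]; module
        rw [h1]
        exact S.sub_mem (S.neg_mem hJe_mem) (S.smul_mem μ he_mem)
    -- dimension count
    have hSrank : Module.finrank ℝ S = 2 := by
      rw [hS_def, finrank_span_eq_card hg_on.linearIndependent]
      simp
    have hWrank : Module.finrank ℝ W = 2 * n := by
      have h1 := Submodule.finrank_add_finrank_orthogonal S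
      rw [hSrank, hdim] at h1
      rw [hW_def]
      omega
    -- restricted operators
    set J' : W →ₗ[ℝ] W := J.restrict hJW with hJ'_def
    set D' : W →ₗ[ℝ] W := D.restrict hDW with hD'_def
    have hJ'coe : ∀ x : W, (J' x : V) = J x := fun x => rfl
    have hD'coe : ∀ x : W, (D' x : V) = D x := fun x => rfl
    have hJ'skew : LinearMap.adjoint J' = -J' := by
      symm
      rw [LinearMap.eq_adjoint_iff]
      intro x y
      rw [LinearMap.neg_apply, Submodule.coe_inner, Submodule.coe_inner]
      have h1 : ((-J' x : W) : V) = (-J : V →ₗ[ℝ] V) (x : V) := by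
        simp [hJ'coe]
      rw [h1, ← hJskew]
      exact LinearMap.adjoint_inner_left J (y : V) (x : V)
    have hJ'2 : J' ∘ₗ J' = -LinearMap.id := by
      ext x
      rw [LinearMap.comp_apply, hJ'coe, hJ'coe, hJJ]
      simp
    have hJ'inj : Function.Injective J' := by
      intro x y hxy
      refine Subtype.ext (hJbij.1 ?_)
      rw [← hJ'coe, ← hJ'coe, hxy]
    have hJ'bij : Function.Bijective J' :=
      ⟨hJ'inj, (LinearMap.injective_iff_surjective).mp hJ'inj⟩
    have hJ'D' : J' ∘ₗ D' = D' ∘ₗ J' := by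
      ext x
      rw [LinearMap.comp_apply, LinearMap.comp_apply, hJ'coe, hD'coe, hD'coe, hJ'coe]
      exact LinearMap.ext_iff.mp hJD (x : V)
    have hD'adj : D' + LinearMap.adjoint D' = -(2 : ℝ) • LinearMap.id := by
      have h1 : (-(2 : ℝ) • LinearMap.id - D' : W →ₗ[ℝ] W) = LinearMap.adjoint D' := by
        rw [LinearMap.eq_adjoint_iff]
        intro x y
        rw [Submodule.coe_inner, Submodule.coe_inner]
        have h2 : (((-(2 : ℝ) • LinearMap.id - D' : W →ₗ[ℝ] W) x : W) : V) =
            ((-(2 : ℝ) • LinearMap.id - D : V →ₗ[ℝ] V)) (x : V) := by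
          simp only [LinearMap.sub_apply, LinearMap.smul_apply, LinearMap.id_apply]
          push_cast
          rw [hD'coe]
        rw [h2, hD'coe, ← hDadj]
        exact LinearMap.adjoint_inner_left D (y : V) (x : V)
      rw [← h1]; abel
    -- apply the inductive hypothesis
    obtain ⟨lam', b', hb'on, hb'J, hb'D, -⟩ :=
      ih W hWrank J' D' hJ'skew hJ'2 hJ'bij hJ'D' hD'adj
    -- build the new orthonormal family
    obtain ⟨f, hf_inl0, hf_inr0, hf_inls, hf_inrs⟩ :
        ∃ f : Fin (n + 1) ⊕ Fin (n + 1) → V,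
          f (Sum.inl 0) = e ∧ f (Sum.inr 0) = J e ∧
          (∀ j : Fin n, f (Sum.inl j.succ) = ((b' (Sum.inl j) : W) : V)) ∧
          (∀ j : Fin n, f (Sum.inr j.succ) = ((b' (Sum.inr j) : W) : V)) :=
      ⟨Sum.elim (fun i => Fin.cases e (fun j => ((b' (Sum.inl j) : W) : V)) i)
               (fun i => Fin.cases (J e) (fun j => ((b' (Sum.inr j) : W) : V)) i),
        by simp, by simp, fun j => by simp, fun j => by simp⟩
    have hb'W : ∀ k, ((b' k : W) : V) ∈ W := fun k => (b' k).2
    have hb'ip : ∀ k l, ⟪((b' k : W) : V), ((b' l : W) : V)⟫ = if k = l then 1 else 0 := by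
      intro k l
      have h1 := orthonormal_iff_ite.mp hb'on k l
      rwa [Submodule.coe_inner] at h1
    have hSb' : ∀ u ∈ S, ∀ k, ⟪u, ((b' k : W) : V)⟫ = 0 := fun u hu k =>
      hSW u hu _ (hb'W k)
    have hb'S : ∀ u ∈ S, ∀ k, ⟪((b' k : W) : V), u⟫ = 0 := fun u hu k => by
      rw [real_inner_comm]; exact hSb' u hu k
    have hzs : ∀ j : Fin n, ((0 : Fin (n + 1)) = j.succ) = False := fun j => by
      simp [eq_comm, Fin.succ_ne_zero]
    clear_value D'
    clear_value J'
    clear_value W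
    clear_value S
    clear_value g
    clear_value B
    clear_value A
    have hfon : Orthonormal ℝ f := by
      rw [orthonormal_iff_ite]
      rintro (i | i) (j | j)
      · induction i using Fin.cases with
        | zero =>
          induction j using Fin.cases with
          | zero => rw [hf_inl0, if_pos rfl]; exact hip_ee
          | succ j =>
            rw [hf_inl0, hf_inls, if_neg (by simp [eq_comm, Fin.succ_ne_zero])]
            exact hSb' e he_mem _
        | succ i =>
          induction j using Fin.cases with
          | zero =>
            rw [hf_inls, hf_inl0, if_neg (by simp [Fin.succ_ne_zero])]
            exact hb'S e he_mem _
          | succ j =>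
            rw [hf_inls, hf_inls, hb'ip]
            by_cases h : i = j
            · rw [h, if_pos rfl, if_pos rfl]
            · rw [if_neg (by simp [h]), if_neg (by simp [h, Fin.succ_inj])]
      · induction i using Fin.cases with
        | zero =>
          induction j using Fin.cases with
          | zero => rw [hf_inl0, hf_inr0, if_neg (by simp)]; exact hip_eJe
          | succ j =>
            rw [hf_inl0, hf_inrs, if_neg (by simp)]
            exact hSb' e he_mem _
        | succ i =>
          induction j using Fin.cases with
          | zero =>
            rw [hf_inls, hf_inr0, if_neg (by simp)]
            exact hb'S (J e) hJe_mem _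
          | succ j =>
            rw [hf_inls, hf_inrs, hb'ip, if_neg (by simp), if_neg (by simp)]
      · induction i using Fin.cases with
        | zero =>
          induction j using Fin.cases with
          | zero => rw [hf_inr0, hf_inl0, if_neg (by simp)]; exact hip_Jee
          | succ j =>
            rw [hf_inr0, hf_inls, if_neg (by simp)]
            exact hSb' (J e) hJe_mem _
        | succ i =>
          induction j using Fin.cases with
          | zero =>
            rw [hf_inrs, hf_inl0, if_neg (by simp)]
            exact hb'S e he_mem _
          | succ j =>
            rw [hf_inrs, hf_inls, hb'ip, if_neg (by simp), if_neg (by simp)]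
      · induction i using Fin.cases with
        | zero =>
          induction j using Fin.cases with
          | zero => rw [hf_inr0, if_pos rfl]; exact hip_JeJe
          | succ j =>
            rw [hf_inr0, hf_inrs, if_neg (by simp [eq_comm, Fin.succ_ne_zero])]
            exact hSb' (J e) hJe_mem _
        | succ i =>
          induction j using Fin.cases with
          | zero =>
            rw [hf_inrs, hf_inr0, if_neg (by simp [Fin.succ_ne_zero])]
            exact hb'S (J e) hJe_mem _
          | succ j =>
            rw [hf_inrs, hf_inrs, hb'ip]
            by_cases h : i = j
            · rw [h, if_pos rfl, if_pos rfl]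
            · rw [if_neg (by simp [h]), if_neg (by simp [h, Fin.succ_inj])]
    have hcard : Fintype.card (Fin (n + 1) ⊕ Fin (n + 1)) = Module.finrank ℝ V := by
      rw [hdim]
      simp [Fintype.card_sum]
      omega
    set b : Module.Basis (Fin (n + 1) ⊕ Fin (n + 1)) ℝ V :=
      basisOfLinearIndependentOfCardEqFinrank hfon.linearIndependent hcard with hb_def
    have hb_eq : ⇑b = f := by
      rw [hb_def, coe_basisOfLinearIndependentOfCardEqFinrank]
    set lam : Fin (n + 1) → ℝ := Fin.cases μ lam' with hlam_def
    have hlam0 : lam 0 = μ := by rw [hlam_def]; simp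
    have hlams : ∀ j : Fin n, lam j.succ = lam' j := fun j => by rw [hlam_def]; simp
    clear_value b lam
    have hprop2 : ∀ j : Fin (n + 1), b (Sum.inr j) = J (b (Sum.inl j)) := by
      intro j
      rw [hb_eq]
      induction j using Fin.cases with
      | zero => rw [hf_inl0, hf_inr0]
      | succ j =>
        rw [hf_inls, hf_inrs, hb'J j, hJ'coe]
    have hprop3 : ∀ j : Fin (n + 1),
        D (b (Sum.inl j)) = -b (Sum.inl j) - lam j • J (b (Sum.inl j)) := by
      intro j
      rw [hb_eq]
      induction j using Fin.cases with
      | zero => rw [hf_inl0, hlam0, hDe]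
      | succ j =>
        rw [hf_inls, hlams]
        have h2 : D ((b' (Sum.inl j) : W) : V) = ((D' (b' (Sum.inl j)) : W) : V) :=
          (hD'coe _).symm
        rw [h2, hb'D j]
        push_cast
        rw [hJ'coe]
    refine ⟨lam, b, by rwa [hb_eq], hprop2, hprop3, ?_⟩
    intro j
    have h4 : D (J (b (Sum.inl j))) = J (D (b (Sum.inl j))) :=
      (LinearMap.ext_iff.mp hJD _).symm
    rw [h4, hprop3 j, map_sub, map_neg, map_smul, hJJ]
    module

/-- If `V` is a real inner product space of dimension `2n`, `J` a skew-symmetric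
isomorphism with `J² = -Id`, and `D` an endomorphism with `[J,D] = 0` and `D + Dᵗ = -2·Id`,
then there exist `λ₁,…,λₙ` and an orthonormal basis `(e₁, Je₁, …, eₙ, Jeₙ)` with
`D eⱼ = -eⱼ - λⱼ Jeⱼ` and `D (Jeⱼ) = -Jeⱼ + λⱼ eⱼ`. -/
theorem stmt0 (n : ℕ) (V : Type*) [NormedAddCommGroup V] [InnerProductSpace ℝ V]
    [FiniteDimensional ℝ V] (hdim : Module.finrank ℝ V = 2 * n)
    (J D : V →ₗ[ℝ] V)
    (hJskew : LinearMap.adjoint J = -J)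
    (hJ2 : J ∘ₗ J = -LinearMap.id)
    (hJbij : Function.Bijective J)
    (hJD : J ∘ₗ D = D ∘ₗ J)
    (hD : D + LinearMap.adjoint D = -(2 : ℝ) • LinearMap.id) :
    ∃ (lam : Fin n → ℝ) (b : Module.Basis (Fin n ⊕ Fin n) ℝ V),
      Orthonormal ℝ b ∧
      (∀ j : Fin n, b (Sum.inr j) = J (b (Sum.inl j))) ∧
      (∀ j : Fin n, D (b (Sum.inl j)) = -b (Sum.inl j) - lam j • J (b (Sum.inl j))) ∧
      (∀ j : Fin n, D (J (b (Sum.inl j))) = -J (b (Sum.inl j)) + lam j • b (Sum.inl j)) := by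
  exact aux_stmt0 n V hdim J D hJskew hJ2 hJbij hJD hD
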